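/- Let Γ be a finite group and p a prime, and let E denote the additive group of functions Γ → ZMod p. For every subgroup L of Γ there exists an additive character χ : AddChar E ℂ such that {g : Γ | ∀ f : E, χ (fun x => f (g⁻¹ * x)) = χ f} = L. -/
import Mathlib


/-- For every subgroup `L` of a finite group `Γ` and prime `p`, there is an additive
character `χ` of `E = (Γ → ZMod p)` with values in `ℂ` whose stabilizer in `Γ`, under
the left-translation action of `Γ` on `E`, is exactly `L`. -/
theorem stmt1 (Γ : Type*) [Group Γ] [Fintype Γ] (p : ℕ) (hp : p.Prime)
    (L : Subgroup Γ) :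
    ∃ χ : AddChar (Γ → ZMod p) ℂ,
      {g : Γ | ∀ f : Γ → ZMod p, χ (fun x => f (g⁻¹ * x)) = χ f} = (L : Set Γ) := by
  classical
  haveI : NeZero p := ⟨hp.ne_zero⟩
  have hζ : IsPrimitiveRoot (Complex.exp (2 * Real.pi * Complex.I / p)) p :=
    Complex.isPrimitiveRoot_exp p hp.ne_zero
  set ζ := Complex.exp (2 * Real.pi * Complex.I / p)
  have hζp : ζ ^ p = 1 := hζ.pow_eq_one
  let ψ : AddChar (ZMod p) ℂ := AddChar.zmodChar p hζp
  have hψinj : Function.Injective ψ := by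
    intro a b hab
    have : ζ ^ a.val = ζ ^ b.val := by
      simpa [ψ, AddChar.zmodChar_apply] using hab
    exact ZMod.val_injective p (hζ.pow_inj (ZMod.val_lt a) (ZMod.val_lt b) this)
  set Lfin : Finset Γ := (L : Set Γ).toFinset with hLfin
  have hmem : ∀ x, x ∈ Lfin ↔ x ∈ L := by intro x; simp [hLfin]
  let S : (Γ → ZMod p) →+ ZMod p :=
    { toFun := fun f => ∑ x ∈ Lfin, f x
      map_zero' := by simp
      map_add' := fun f g => by simp [Finset.sum_add_distrib] }
  refine ⟨ψ.compAddMonoidHom S, ?_⟩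
  ext g
  simp only [Set.mem_setOf_eq, AddChar.compAddMonoidHom_apply, SetLike.mem_coe]
  constructor
  · intro hg
    by_contra hgL
    have hkey := hg (fun y => if y = 1 then 1 else 0)
    have hL : (∑ x ∈ Lfin, if g⁻¹ * x = 1 then (1 : ZMod p) else 0)
        = ∑ x ∈ Lfin, if x = g then (1 : ZMod p) else 0 := by
      refine Finset.sum_congr rfl fun x _ => ?_
      refine if_congr ?_ rfl rfl
      rw [inv_mul_eq_one, eq_comm]
    have h1 : S (fun x => if g⁻¹ * x = 1 then (1:ZMod p) else 0) = 0 := by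
      show (∑ x ∈ Lfin, if g⁻¹ * x = 1 then (1 : ZMod p) else 0) = 0
      rw [hL, Finset.sum_ite_eq' Lfin g (fun _ => (1 : ZMod p))]
      simp [hmem, hgL]
    have h2 : S (fun y => if y = 1 then (1:ZMod p) else 0) = 1 := by
      show (∑ x ∈ Lfin, if x = 1 then (1 : ZMod p) else 0) = 1
      rw [Finset.sum_ite_eq' Lfin 1 (fun _ => (1 : ZMod p))]
      simp [hmem, L.one_mem]
    haveI := Fact.mk hp
    have key : ψ 0 = ψ 1 := by rw [h1, h2] at hkey; exact hkey
    exact zero_ne_one (α := ZMod p) (hψinj key)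
  · intro hg f
    congr 1
    show (∑ x ∈ Lfin, f (g⁻¹ * x)) = ∑ x ∈ Lfin, f x
    refine Finset.sum_nbij' (fun x => g⁻¹ * x) (fun y => g * y) ?_ ?_ ?_ ?_ ?_
    · intro x hx
      rw [hmem] at hx ⊢; exact L.mul_mem (L.inv_mem hg) hx
    · intro y hy
      rw [hmem] at hy ⊢; exact L.mul_mem hg hy
    · intro x _; group
    · intro y _; group
    · intro x _; rfl
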